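/- Morley conconic corollary (via condition (1) of Theorem 1): in any triangle ABC, the six points at which the angle trisectors meet the opposite sides — A₁, A₂ on BC, B₁, B₂ on CA, C₁, C₂ on AB — are conconic. -/

import Mathlib

open EuclideanGeometry

abbrev Pt := EuclideanSpace ℝ (Fin 2)

/-- Six (or any set of) points lie on a common conic: a nonzero quadratic equation
vanishes at each of them. -/
def Conconic (s : Set Pt) : Prop :=
  ∃ a b c d e f : ℝ, (a, b, c, d, e, f) ≠ (0, 0, 0, 0, 0, 0) ∧
    ∀ P ∈ s, a * (P 0) ^ 2 + b * (P 0) * (P 1) + c * (P 1) ^ 2 + d * (P 0) + e * (P 1) + f = 0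

namespace MorleyAux

/-- 2D cross product. -/
def crs (u v : Pt) : ℝ := u 0 * v 1 - u 1 * v 0

/-- 2D dot product. -/
def dt (u v : Pt) : ℝ := u 0 * v 0 + u 1 * v 1

lemma inner_eq_dt (u v : Pt) : (inner ℝ u v : ℝ) = dt u v := by
  simp [dt, PiLp.inner_apply, Fin.sum_univ_two, RCLike.inner_apply, mul_comm]

lemma sin_crs (u v : Pt) :
    Real.sin (InnerProductGeometry.angle u v) * (‖u‖ * ‖v‖) = |crs u v| := by
  rw [InnerProductGeometry.sin_angle_mul_norm_mul_norm]
  rw [show (inner ℝ u u : ℝ) * (inner ℝ v v : ℝ) - (inner ℝ u v : ℝ) * (inner ℝ u v : ℝ)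
      = (crs u v) ^ 2 by
    rw [inner_eq_dt, inner_eq_dt, inner_eq_dt]; simp only [dt, crs]; ring]
  exact Real.sqrt_sq_eq_abs _

lemma cos_dt (u v : Pt) :
    Real.cos (InnerProductGeometry.angle u v) * (‖u‖ * ‖v‖) = dt u v := by
  rw [InnerProductGeometry.cos_angle_mul_norm_mul_norm, inner_eq_dt]

lemma dt_pos {u : Pt} (hu : u ≠ 0) : 0 < dt u u := by
  have h : u 0 ≠ 0 ∨ u 1 ≠ 0 := by
    by_contra h
    push_neg at h
    exact hu (by ext i; fin_cases i <;> simp [h.1, h.2])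
  rcases h with h | h
  · have := mul_self_pos.2 h
    have := mul_self_nonneg (u 1)
    simp only [dt]; nlinarith
  · have := mul_self_pos.2 h
    have := mul_self_nonneg (u 0)
    simp only [dt]; nlinarith

/-- Key ratio lemma (isogonal cevian relation). -/
lemma ratio (V P Q X Y : Pt) (hK : crs (P - V) (Q - V) ≠ 0)
    {t s : ℝ} (ht0 : 0 < t) (hs1 : s < 1)
    (hX : X = AffineMap.lineMap P Q t) (hY : Y = AffineMap.lineMap P Q s)
    (hang : ∠ P V X = ∠ Q V Y) :
    dt (P - V) (P - V) * ((1 - t) * (1 - s)) = dt (Q - V) (Q - V) * (t * s) := by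
  subst hX; subst hY
  have hangP : ∠ P V (AffineMap.lineMap P Q t) =
      InnerProductGeometry.angle (P - V) ((AffineMap.lineMap P Q t : Pt) - V) := by
    simp [EuclideanGeometry.angle, vsub_eq_sub]
  have hangQ : ∠ Q V (AffineMap.lineMap P Q s) =
      InnerProductGeometry.angle (Q - V) ((AffineMap.lineMap P Q s : Pt) - V) := by
    simp [EuclideanGeometry.angle, vsub_eq_sub]
  have hcrs1 : crs (P - V) ((AffineMap.lineMap P Q t : Pt) - V)
      = t * crs (P - V) (Q - V) := by
    simp only [crs, AffineMap.lineMap_apply, vsub_eq_sub, vadd_eq_add, PiLp.sub_apply,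
      PiLp.add_apply, PiLp.smul_apply, smul_eq_mul]
    ring
  have hcrs2 : crs (Q - V) ((AffineMap.lineMap P Q s : Pt) - V)
      = (1 - s) * (-(crs (P - V) (Q - V))) := by
    simp only [crs, AffineMap.lineMap_apply, vsub_eq_sub, vadd_eq_add, PiLp.sub_apply,
      PiLp.add_apply, PiLp.smul_apply, smul_eq_mul]
    ring
  have e1 : Real.sin (∠ Q V (AffineMap.lineMap P Q s)) *
      (‖P - V‖ * ‖(AffineMap.lineMap P Q t : Pt) - V‖) = t * |crs (P - V) (Q - V)| := by
    rw [← hang, hangP, sin_crs, hcrs1, abs_mul, abs_of_pos ht0]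
  have e2 : Real.sin (∠ Q V (AffineMap.lineMap P Q s)) *
      (‖Q - V‖ * ‖(AffineMap.lineMap P Q s : Pt) - V‖)
      = (1 - s) * |crs (P - V) (Q - V)| := by
    rw [hangQ, sin_crs, hcrs2, abs_mul, abs_neg, abs_of_pos (by linarith : (0:ℝ) < 1 - s)]
  have e1c : Real.cos (∠ Q V (AffineMap.lineMap P Q s)) *
      (‖P - V‖ * ‖(AffineMap.lineMap P Q t : Pt) - V‖)
      = dt (P - V) ((AffineMap.lineMap P Q t : Pt) - V) := by
    rw [← hang, hangP, cos_dt]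
  have e2c : Real.cos (∠ Q V (AffineMap.lineMap P Q s)) *
      (‖Q - V‖ * ‖(AffineMap.lineMap P Q s : Pt) - V‖)
      = dt (Q - V) ((AffineMap.lineMap P Q s : Pt) - V) := by
    rw [hangQ, cos_dt]
  have key : (t * |crs (P - V) (Q - V)|) * dt (Q - V) ((AffineMap.lineMap P Q s : Pt) - V)
      = ((1 - s) * |crs (P - V) (Q - V)|) *
        dt (P - V) ((AffineMap.lineMap P Q t : Pt) - V) := by
    rw [← e1, ← e2c, ← e2, ← e1c]; ring
  have habs : |crs (P - V) (Q - V)| ≠ 0 := abs_ne_zero.mpr hK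
  have key2 : t * dt (Q - V) ((AffineMap.lineMap P Q s : Pt) - V)
      = (1 - s) * dt (P - V) ((AffineMap.lineMap P Q t : Pt) - V) :=
    mul_left_cancel₀ habs (by linear_combination key)
  simp only [dt, AffineMap.lineMap_apply, vsub_eq_sub, vadd_eq_add, PiLp.sub_apply,
    PiLp.add_apply, PiLp.smul_apply, smul_eq_mul] at key2 ⊢
  linear_combination -key2

lemma crs_ne_zero {A B C : Pt} (h : AffineIndependent ℝ ![A, B, C]) :
    crs (B - A) (C - A) ≠ 0 := by
  intro hc
  rw [affineIndependent_iff_not_collinear_set] at h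
  apply h
  simp only [crs, PiLp.sub_apply] at hc
  by_cases hBA : B = A
  · have : ({A, B, C} : Set Pt) = {A, C} := by rw [hBA]; simp
    rw [this]
    exact collinear_pair ℝ A C
  · rw [collinear_iff_of_mem (Set.mem_insert A {B, C})]
    refine ⟨B - A, fun p hp => ?_⟩
    simp only [Set.mem_insert_iff, Set.mem_singleton_iff] at hp
    rcases hp with rfl | rfl | hp
    · exact ⟨0, by simp⟩
    · exact ⟨1, by simp⟩
    · rw [hp]
      by_cases h0 : B 0 - A 0 = 0
      · have h1 : B 1 - A 1 ≠ 0 := by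
          intro h1
          apply hBA
          ext i
          fin_cases i
          · simpa using (by linarith : B 0 = A 0)
          · simpa using (by linarith : B 1 = A 1)
        have hC0 : C 0 - A 0 = 0 := by
          rcases mul_eq_zero.mp
            (by linear_combination (C 1 - A 1) * h0 - hc : (B 1 - A 1) * (C 0 - A 0) = 0)
            with h' | h'
          · exact absurd h' h1
          · exact h'
        refine ⟨(C 1 - A 1) / (B 1 - A 1), ?_⟩
        ext i
        fin_cases i <;>
          simp only [vadd_eq_add, PiLp.add_apply, PiLp.smul_apply, PiLp.sub_apply,
            smul_eq_mul, Fin.isValue, Fin.zero_eta, Fin.mk_one]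
        · rw [h0, mul_zero, zero_add]; linarith
        · field_simp; ring
      · refine ⟨(C 0 - A 0) / (B 0 - A 0), ?_⟩
        ext i
        fin_cases i <;>
          simp only [vadd_eq_add, PiLp.add_apply, PiLp.smul_apply, PiLp.sub_apply,
            smul_eq_mul, Fin.isValue, Fin.zero_eta, Fin.mk_one]
        · field_simp; ring
        · field_simp
          linear_combination hc

set_option maxHeartbeats 1000000 in
/-- The explicit conic through six points, two on each side of the triangle,
given the Carnot product relation. -/
lemma carnot_conic (a0 a1 b0 b1 c0 c1 t1 t2 u1 u2 v1 v2 : ℝ)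
    (hKne : (c0-b0)*(a1-b1) - (c1-b1)*(a0-b0) ≠ 0)
    (ht1 : 0 < t1) (ht1' : t1 < 1) (ht2 : 0 < t2) (ht2' : t2 < 1)
    (hu1 : 0 < u1) (hu1' : u1 < 1) (hu2 : 0 < u2) (hu2' : u2 < 1)
    (hv1 : 0 < v1) (hv1' : v1 < 1) (hv2 : 0 < v2) (hv2' : v2 < 1)
    (hcar : (1-t1)*(1-t2)*((1-u1)*(1-u2))*((1-v1)*(1-v2)) = t1*t2*(u1*u2)*(v1*v2)) :
    ∃ a b c d e f : ℝ, (a, b, c, d, e, f) ≠ (0, 0, 0, 0, 0, 0) ∧ ∀ x y : ℝ,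
      ((x = b0 + t1*(c0-b0) ∧ y = b1 + t1*(c1-b1)) ∨
       (x = b0 + t2*(c0-b0) ∧ y = b1 + t2*(c1-b1)) ∨
       (x = c0 + u1*(a0-c0) ∧ y = c1 + u1*(a1-c1)) ∨
       (x = c0 + u2*(a0-c0) ∧ y = c1 + u2*(a1-c1)) ∨
       (x = a0 + v1*(b0-a0) ∧ y = a1 + v1*(b1-a1)) ∨
       (x = a0 + v2*(b0-a0) ∧ y = a1 + v2*(b1-a1))) →
      a * x ^ 2 + b * x * y + c * y ^ 2 + d * x + e * y + f = 0 := by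
  obtain ⟨K, hK⟩ : ∃ x : ℝ, x = (c0-b0)*(a1-b1) - (c1-b1)*(a0-b0) := ⟨_, rfl⟩
  obtain ⟨p1, hp1⟩ : ∃ x : ℝ, x = a1 - b1 := ⟨_, rfl⟩
  obtain ⟨p2, hp2⟩ : ∃ x : ℝ, x = -(a0 - b0) := ⟨_, rfl⟩
  obtain ⟨p3, hp3⟩ : ∃ x : ℝ, x = b1*(a0-b0) - b0*(a1-b1) := ⟨_, rfl⟩
  obtain ⟨q1, hq1⟩ : ∃ x : ℝ, x = c1 - b1 := ⟨_, rfl⟩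
  obtain ⟨q2, hq2⟩ : ∃ x : ℝ, x = -(c0 - b0) := ⟨_, rfl⟩
  obtain ⟨q3, hq3⟩ : ∃ x : ℝ, x = b1*(c0-b0) - b0*(c1-b1) := ⟨_, rfl⟩
  obtain ⟨ap, hap⟩ : ∃ x : ℝ, x = u1*(1-u1)*((1-v1)*(1-v2)) := ⟨_, rfl⟩
  obtain ⟨cp, hcp⟩ : ∃ x : ℝ, x = u1*(1-u1)*(t1*t2) := ⟨_, rfl⟩
  obtain ⟨dp, hdp⟩ : ∃ x : ℝ, x = -(u1*(1-u1)*((1-v1)*(1-v2))*(t1+t2)) := ⟨_, rfl⟩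
  obtain ⟨ep, hep⟩ : ∃ x : ℝ, x = -(u1*(1-u1)*(t1*t2)*((1-v1)+(1-v2))) := ⟨_, rfl⟩
  obtain ⟨fp, hfp⟩ : ∃ x : ℝ, x = u1*(1-u1)*((1-v1)*(1-v2))*(t1*t2) := ⟨_, rfl⟩
  obtain ⟨bp, hbp⟩ : ∃ x : ℝ, x = -((1-v1)*(1-v2)*(1-u1)^2 + t1*t2*u1^2
      - (1-v1)*(1-v2)*(t1+t2)*(1-u1) - t1*t2*((1-v1)+(1-v2))*u1
      + (1-v1)*(1-v2)*(t1*t2)) := ⟨_, rfl⟩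
  obtain ⟨a, ha⟩ : ∃ x : ℝ, x = ap*p1^2 - bp*(p1*q1) + cp*q1^2 := ⟨_, rfl⟩
  obtain ⟨b, hb⟩ : ∃ x : ℝ, x = 2*ap*(p1*p2) - bp*(p1*q2+p2*q1) + 2*cp*(q1*q2) := ⟨_, rfl⟩
  obtain ⟨c, hc⟩ : ∃ x : ℝ, x = ap*p2^2 - bp*(p2*q2) + cp*q2^2 := ⟨_, rfl⟩
  obtain ⟨d, hd⟩ : ∃ x : ℝ, x = 2*ap*(p1*p3) - bp*(p1*q3+p3*q1) + 2*cp*(q1*q3)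
      + dp*(K*p1) - ep*(K*q1) := ⟨_, rfl⟩
  obtain ⟨e, he⟩ : ∃ x : ℝ, x = 2*ap*(p2*p3) - bp*(p2*q3+p3*q2) + 2*cp*(q2*q3)
      + dp*(K*p2) - ep*(K*q2) := ⟨_, rfl⟩
  obtain ⟨f, hf⟩ : ∃ x : ℝ, x = ap*p3^2 - bp*(p3*q3) + cp*q3^2 + dp*(K*p3)
      - ep*(K*q3) + fp*K^2 := ⟨_, rfl⟩
  have hG : ∀ x y : ℝ, a * x ^ 2 + b * x * y + c * y ^ 2 + d * x + e * y + f
      = ap*(p1*x + p2*y + p3)^2 - bp*((p1*x + p2*y + p3)*(q1*x + q2*y + q3))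
        + cp*(q1*x + q2*y + q3)^2 + dp*(K*(p1*x + p2*y + p3))
        - ep*(K*(q1*x + q2*y + q3)) + fp*K^2 := by
    intro x y
    rw [ha, hb, hc, hd, he, hf]
    ring
  have hKne' : K ≠ 0 := by rw [hK]; exact hKne
  have hLA : ∀ t : ℝ, p1*(b0 + t*(c0-b0)) + p2*(b1 + t*(c1-b1)) + p3 = t*K := by
    intro t; rw [hp1, hp2, hp3, hK]; ring
  have hMA : ∀ t : ℝ, q1*(b0 + t*(c0-b0)) + q2*(b1 + t*(c1-b1)) + q3 = 0 := by
    intro t; rw [hq1, hq2, hq3]; ring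
  have hLB : ∀ u : ℝ, p1*(c0 + u*(a0-c0)) + p2*(c1 + u*(a1-c1)) + p3 = (1-u)*K := by
    intro u; rw [hp1, hp2, hp3, hK]; ring
  have hMB : ∀ u : ℝ, q1*(c0 + u*(a0-c0)) + q2*(c1 + u*(a1-c1)) + q3 = -(u*K) := by
    intro u; rw [hq1, hq2, hq3, hK]; ring
  have hLC : ∀ v : ℝ, p1*(a0 + v*(b0-a0)) + p2*(a1 + v*(b1-a1)) + p3 = 0 := by
    intro v; rw [hp1, hp2, hp3]; ring
  have hMC : ∀ v : ℝ, q1*(a0 + v*(b0-a0)) + q2*(a1 + v*(b1-a1)) + q3 = -((1-v)*K) := by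
    intro v; rw [hq1, hq2, hq3, hK]; ring
  refine ⟨a, b, c, d, e, f, ?_, ?_⟩
  · intro h
    simp only [Prod.mk.injEq] at h
    obtain ⟨h1, h2, h3, h4, h5, h6⟩ := h
    have h0 := hG b0 b1
    rw [h1, h2, h3, h4, h5, h6] at h0
    have hL0 : p1*b0 + p2*b1 + p3 = 0 := by rw [hp1, hp2, hp3]; ring
    have hM0 : q1*b0 + q2*b1 + q3 = 0 := by rw [hq1, hq2, hq3]; ring
    rw [hL0, hM0] at h0
    have hfpos : 0 < fp := by
      rw [hfp]
      apply mul_pos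
      apply mul_pos
      exact mul_pos hu1 (by linarith)
      exact mul_pos (by linarith) (by linarith)
      exact mul_pos ht1 ht2
    have hK2 : 0 < K^2 := lt_of_le_of_ne (sq_nonneg _) (Ne.symm (pow_ne_zero 2 hKne'))
    have hzero : fp * K^2 = 0 := by linear_combination -h0
    exact absurd hzero (ne_of_gt (mul_pos hfpos hK2))
  · rintro x y (⟨rfl, rfl⟩ | ⟨rfl, rfl⟩ | ⟨rfl, rfl⟩ | ⟨rfl, rfl⟩ | ⟨rfl, rfl⟩ | ⟨rfl, rfl⟩)
    · rw [hG, hLA, hMA, hap, hdp, hfp]; ring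
    · rw [hG, hLA, hMA, hap, hdp, hfp]; ring
    · rw [hG, hLB, hMB, hap, hbp, hcp, hdp, hep, hfp]; ring
    · rw [hG, hLB, hMB, hap, hbp, hcp, hdp, hep, hfp]
      linear_combination (-((u2-u1)*K^2)) * hcar
    · rw [hG, hLC, hMC, hcp, hep, hfp]; ring
    · rw [hG, hLC, hMC, hcp, hep, hfp]; ring

end MorleyAux

open MorleyAux in
/-- Morley conconic corollary: the six points where the angle trisectors of a triangle
meet the opposite sides are conconic. -/
theorem morley_trisector_feet_conconic
    (A B C A₁ A₂ B₁ B₂ C₁ C₂ : Pt)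
    (hABC : AffineIndependent ℝ ![A, B, C])
    (hA₁ : Sbtw ℝ B A₁ C) (haA₁ : ∠ B A A₁ = ∠ B A C / 3)
    (hA₂ : Sbtw ℝ B A₂ C) (haA₂ : ∠ C A A₂ = ∠ B A C / 3)
    (hB₁ : Sbtw ℝ C B₁ A) (haB₁ : ∠ C B B₁ = ∠ A B C / 3)
    (hB₂ : Sbtw ℝ C B₂ A) (haB₂ : ∠ A B B₂ = ∠ A B C / 3)
    (hC₁ : Sbtw ℝ A C₁ B) (haC₁ : ∠ A C C₁ = ∠ B C A / 3)
    (hC₂ : Sbtw ℝ A C₂ B) (haC₂ : ∠ B C C₂ = ∠ B C A / 3) :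
    Conconic {A₁, A₂, B₁, B₂, C₁, C₂} := by
  obtain ⟨t1, ⟨ht10, ht11⟩, hA1eq⟩ := hA₁.mem_image_Ioo
  obtain ⟨t2, ⟨ht20, ht21⟩, hA2eq⟩ := hA₂.mem_image_Ioo
  obtain ⟨u1, ⟨hu10, hu11⟩, hB1eq⟩ := hB₁.mem_image_Ioo
  obtain ⟨u2, ⟨hu20, hu21⟩, hB2eq⟩ := hB₂.mem_image_Ioo
  obtain ⟨v1, ⟨hv10, hv11⟩, hC1eq⟩ := hC₁.mem_image_Ioo
  obtain ⟨v2, ⟨hv20, hv21⟩, hC2eq⟩ := hC₂.mem_image_Ioo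
  have hK0 : crs (B - A) (C - A) ≠ 0 := crs_ne_zero hABC
  have hKB : crs (C - B) (A - B) ≠ 0 := by
    intro h; apply hK0
    simp only [crs, PiLp.sub_apply] at h ⊢
    linear_combination h
  have hKC : crs (A - C) (B - C) ≠ 0 := by
    intro h; apply hK0
    simp only [crs, PiLp.sub_apply] at h ⊢
    linear_combination h
  -- the three isogonal relations
  have Ra : dt (B - A) (B - A) * ((1 - t1) * (1 - t2)) = dt (C - A) (C - A) * (t1 * t2) :=
    ratio A B C A₁ A₂ hK0 ht10 ht21 hA1eq.symm hA2eq.symm (by rw [haA₁, haA₂])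
  have Rb : dt (C - B) (C - B) * ((1 - u1) * (1 - u2)) = dt (A - B) (A - B) * (u1 * u2) :=
    ratio B C A B₁ B₂ hKB hu10 hu21 hB1eq.symm hB2eq.symm (by rw [haB₁, haB₂])
  have Rc : dt (A - C) (A - C) * ((1 - v1) * (1 - v2)) = dt (B - C) (B - C) * (v1 * v2) :=
    ratio C A B C₁ C₂ hKC hv10 hv21 hC1eq.symm hC2eq.symm (by rw [haC₁, haC₂])
  have hABne : B - A ≠ 0 := by
    intro h; apply hK0; rw [crs, h]; simp
  have hACne : C - A ≠ 0 := by
    intro h; apply hK0; rw [crs, h]; simp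
  have hBCne : C - B ≠ 0 := by
    intro h; apply hKB; rw [crs, h]; simp
  have hccpos := dt_pos hABne
  have hbbpos := dt_pos hACne
  have haapos := dt_pos hBCne
  have hswap1 : dt (A - B) (A - B) = dt (B - A) (B - A) := by
    simp only [dt, PiLp.sub_apply]; ring
  have hswap2 : dt (A - C) (A - C) = dt (C - A) (C - A) := by
    simp only [dt, PiLp.sub_apply]; ring
  have hswap3 : dt (B - C) (B - C) = dt (C - B) (C - B) := by
    simp only [dt, PiLp.sub_apply]; ring
  rw [hswap1] at Rb
  rw [hswap2, hswap3] at Rc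
  set cc := dt (B - A) (B - A) with hccdef
  set bb := dt (C - A) (C - A) with hbbdef
  set aa := dt (C - B) (C - B) with haadef
  have h6 : (cc * aa * bb) * ((1-t1)*(1-t2)*((1-u1)*(1-u2))*((1-v1)*(1-v2)))
      = (cc * aa * bb) * (t1*t2*(u1*u2)*(v1*v2)) := by
    linear_combination (aa*((1-u1)*(1-u2))*(bb*((1-v1)*(1-v2)))) * Ra
      + (bb*(t1*t2))*(bb*((1-v1)*(1-v2))) * Rb
      + (bb*(t1*t2))*(cc*(u1*u2)) * Rc
  have hcar : (1-t1)*(1-t2)*((1-u1)*(1-u2))*((1-v1)*(1-v2)) = t1*t2*(u1*u2)*(v1*v2) :=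
    mul_left_cancel₀ (ne_of_gt (mul_pos (mul_pos hccpos haapos) hbbpos)) h6
  have hKB' : (C 0 - B 0)*(A 1 - B 1) - (C 1 - B 1)*(A 0 - B 0) ≠ 0 := by
    simpa only [crs, PiLp.sub_apply] using hKB
  obtain ⟨a, b, c, d, e, f, hne, hvan⟩ :=
    carnot_conic (A 0) (A 1) (B 0) (B 1) (C 0) (C 1) t1 t2 u1 u2 v1 v2 hKB'
      ht10 ht11 ht20 ht21 hu10 hu11 hu20 hu21 hv10 hv11 hv20 hv21 hcar
  refine ⟨a, b, c, d, e, f, hne, ?_⟩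
  intro P hP
  have coords : ∀ (W Z : Pt) (r : ℝ) (i : Fin 2),
      (AffineMap.lineMap W Z r : Pt) i = W i + r * (Z i - W i) := by
    intro W Z r i
    simp only [AffineMap.lineMap_apply, vsub_eq_sub, vadd_eq_add, PiLp.add_apply,
      PiLp.sub_apply, PiLp.smul_apply, smul_eq_mul]
    ring
  simp only [Set.mem_insert_iff, Set.mem_singleton_iff] at hP
  rcases hP with rfl | rfl | rfl | rfl | rfl | rfl
  · exact hvan _ _ (Or.inl ⟨by rw [← hA1eq, coords], by rw [← hA1eq, coords]⟩)
  · exact hvan _ _ (Or.inr (Or.inl ⟨by rw [← hA2eq, coords], by rw [← hA2eq, coords]⟩))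
  · exact hvan _ _ (Or.inr (Or.inr (Or.inl
      ⟨by rw [← hB1eq, coords], by rw [← hB1eq, coords]⟩)))
  · exact hvan _ _ (Or.inr (Or.inr (Or.inr (Or.inl
      ⟨by rw [← hB2eq, coords], by rw [← hB2eq, coords]⟩))))
  · exact hvan _ _ (Or.inr (Or.inr (Or.inr (Or.inr (Or.inl
      ⟨by rw [← hC1eq, coords], by rw [← hC1eq, coords]⟩)))))
  · exact hvan _ _ (Or.inr (Or.inr (Or.inr (Or.inr (Or.inr
      ⟨by rw [← hC2eq, coords], by rw [← hC2eq, coords]⟩)))))
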